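/- Let α, β ≥ 0 be real numbers and n ≥ 1 an integer. There exists a monic real polynomial p of degree n with sup_{t ∈ [0,1]} t^α (1−t)^β |p(t)| = E_n(α,β) whose roots are n distinct real numbers ξ_1 < ξ_2 < ... < ξ_n, all lying in the open interval (0,1), so that p(t) = (t−ξ_1)(t−ξ_2)⋯(t−ξ_n). -/

import Mathlib

/-- The weighted sup norm `sup_{t ∈ [0,1]} t^α (1-t)^β |p(t)|` (real `rpow`, so `0^0 = 1`). -/
noncomputable def intervalSup (a b : ℝ) (p : Polynomial ℝ) : ℝ :=
  sSup ((fun t : ℝ => t ^ a * (1 - t) ^ b * |p.eval t|) '' Set.Icc (0 : ℝ) 1)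

/-- The 1-D weighted Chebyshev constant `E_m(α,β)`: infimum over monic real polynomials of
degree `m` of `sup_{t ∈ [0,1]} t^α (1-t)^β |p(t)|`. -/
noncomputable def devE (m : ℕ) (a b : ℝ) : ℝ :=
  sInf {r : ℝ | ∃ p : Polynomial ℝ, p.Monic ∧ p.natDegree = m ∧ r = intervalSup a b p}

namespace ChebAux
open Polynomial

variable {a b : ℝ}

lemma cont_rpow (ha : 0 ≤ a) : Continuous (fun t : ℝ => t ^ a) := by
  rw [continuous_iff_continuousAt]
  intro x
  rcases eq_or_ne x 0 with rfl | hx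
  · exact Real.continuousAt_rpow_const 0 a (Or.inr ha)
  · exact Real.continuousAt_rpow_const x a (Or.inl hx)

lemma cont_w (ha : 0 ≤ a) (hb : 0 ≤ b) (p : Polynomial ℝ) :
    Continuous (fun t : ℝ => t ^ a * (1 - t) ^ b * |p.eval t|) := by
  exact ((cont_rpow ha).mul ((cont_rpow hb).comp (continuous_const.sub continuous_id))).mul
    (p.continuous.abs)

lemma w_nonneg {t : ℝ} (ht : t ∈ Set.Icc (0:ℝ) 1) : 0 ≤ t ^ a * (1 - t) ^ b :=
  mul_nonneg (Real.rpow_nonneg ht.1 a) (Real.rpow_nonneg (by linarith [ht.2]) b)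

lemma img_nonempty (p : Polynomial ℝ) :
    ((fun t : ℝ => t ^ a * (1 - t) ^ b * |p.eval t|) '' Set.Icc (0 : ℝ) 1).Nonempty :=
  ⟨_, Set.mem_image_of_mem _ (Set.mem_Icc.2 ⟨le_refl (0:ℝ), zero_le_one⟩)⟩

lemma bdd_img (ha : 0 ≤ a) (hb : 0 ≤ b) (p : Polynomial ℝ) :
    BddAbove ((fun t : ℝ => t ^ a * (1 - t) ^ b * |p.eval t|) '' Set.Icc (0 : ℝ) 1) :=
  isCompact_Icc.bddAbove_image (cont_w ha hb p).continuousOn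

lemma le_intervalSup (ha : 0 ≤ a) (hb : 0 ≤ b) (p : Polynomial ℝ) {t : ℝ}
    (ht : t ∈ Set.Icc (0:ℝ) 1) :
    t ^ a * (1 - t) ^ b * |p.eval t| ≤ intervalSup a b p :=
  le_csSup (bdd_img ha hb p) (Set.mem_image_of_mem _ ht)

lemma intervalSup_le (p : Polynomial ℝ) {c : ℝ}
    (hc : ∀ t ∈ Set.Icc (0:ℝ) 1, t ^ a * (1 - t) ^ b * |p.eval t| ≤ c) :
    intervalSup a b p ≤ c := by
  refine csSup_le (img_nonempty p) ?_
  rintro r ⟨t, ht, rfl⟩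
  exact hc t ht

lemma intervalSup_nonneg (ha : 0 ≤ a) (hb : 0 ≤ b) (p : Polynomial ℝ) :
    0 ≤ intervalSup a b p := by
  refine le_trans ?_ (le_intervalSup ha hb p (Set.mem_Icc.2 ⟨le_refl (0:ℝ), zero_le_one⟩))
  exact mul_nonneg (w_nonneg (Set.mem_Icc.2 ⟨le_refl (0:ℝ), zero_le_one⟩)) (abs_nonneg _)

/-- The monic polynomial with prescribed roots. -/
noncomputable def prodP {n : ℕ} (ξ : Fin n → ℝ) : Polynomial ℝ := ∏ i, (X - C (ξ i))

lemma evalP {n : ℕ} (ξ : Fin n → ℝ) (t : ℝ) :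
    (prodP ξ).eval t = ∏ i, (t - ξ i) := by
  simp [prodP, eval_prod]

lemma monicP {n : ℕ} (ξ : Fin n → ℝ) : (prodP ξ).Monic :=
  monic_prod_of_monic _ _ (fun i _ => monic_X_sub_C _)

lemma degP {n : ℕ} (ξ : Fin n → ℝ) : (prodP ξ).natDegree = n := by
  rw [prodP, Polynomial.natDegree_prod _ _ (fun i _ => X_sub_C_ne_zero _)]
  simp

lemma intervalSup_mono {p q : Polynomial ℝ}
    (h : ∀ t ∈ Set.Icc (0:ℝ) 1, |q.eval t| ≤ |p.eval t|) (ha : 0 ≤ a) (hb : 0 ≤ b) :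
    intervalSup a b q ≤ intervalSup a b p := by
  refine intervalSup_le q (fun t ht => le_trans ?_ (le_intervalSup ha hb p ht))
  exact mul_le_mul_of_nonneg_left (h t ht) (w_nonneg ht)



lemma clamp_mem (x : ℝ) : max 0 (min 1 x) ∈ Set.Icc (0:ℝ) 1 :=
  ⟨le_max_left _ _, max_le zero_le_one (min_le_left _ _)⟩

lemma clamp_close {t x : ℝ} (ht : t ∈ Set.Icc (0:ℝ) 1) :
    |t - max 0 (min 1 x)| ≤ |t - x| := by
  obtain ⟨ht0, ht1⟩ := ht
  rcases le_or_gt x 0 with h | h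
  · rw [max_eq_left (by linarith [min_le_right (1:ℝ) x] : min 1 x ≤ 0)]
    rw [abs_of_nonneg (by linarith), abs_of_nonneg (by linarith)]
    linarith
  rcases le_or_gt 1 x with h' | h'
  · rw [min_eq_left h', max_eq_right zero_le_one]
    rw [abs_of_nonpos (by linarith), abs_of_nonpos (by linarith)]
    linarith
  · rw [min_eq_right h'.le, max_eq_right h.le]

lemma clamp_le_cabs {t : ℝ} (ht : t ∈ Set.Icc (0:ℝ) 1) (z : ℂ) :
    |t - max 0 (min 1 z.re)| ≤ ‖(t : ℂ) - z‖ := by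
  refine le_trans (clamp_close ht) ?_
  have : t - z.re = ((t:ℂ) - z).re := by simp
  rw [this]
  exact Complex.abs_re_le_norm _

/-- Clamping: any monic real polynomial of degree n is pointwise dominated on [0,1]
by a monic polynomial with all roots in [0,1]. -/
lemma exists_clamped {n : ℕ} {p : Polynomial ℝ} (hm : p.Monic) (hd : p.natDegree = n) :
    ∃ ξ : Fin n → ℝ, (∀ i, ξ i ∈ Set.Icc (0:ℝ) 1) ∧
      ∀ t ∈ Set.Icc (0:ℝ) 1, ∏ i, |t - ξ i| ≤ |p.eval t| := by
  set q : Polynomial ℂ := p.map (algebraMap ℝ ℂ) with hqdef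
  have hqm : q.Monic := hm.map _
  have hsp : Splits q := IsAlgClosed.splits q
  have hcard : Multiset.card q.roots = n := by
    rw [splits_iff_card_roots.1 hsp, hqdef, natDegree_map, hd]
  set L : List ℂ := q.roots.toList with hLdef
  have hlen : L.length = n := by rw [hLdef, Multiset.length_toList, hcard]
  refine ⟨fun i => max 0 (min 1 (L.get (Fin.cast hlen.symm i)).re),
    fun i => clamp_mem _, fun t ht => ?_⟩
  have hev : |p.eval t| = ∏ i : Fin n, ‖(t:ℂ) - L.get (Fin.cast hlen.symm i)‖ := by
    have h1 : (‖q.eval (t:ℂ)‖ : ℝ) = |p.eval t| := by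
      rw [hqdef, eval_map]
      rw [show ((t:ℂ)) = algebraMap ℝ ℂ t from rfl, Polynomial.eval₂_at_apply]
      simp
    have h2 : q = (Multiset.map (fun z => X - C z) q.roots).prod :=
      hsp.eq_prod_roots_of_monic hqm
    rw [← h1]
    conv_lhs => rw [h2]
    rw [eval_multiset_prod, show ∀ m : Multiset ℂ, ‖m.prod‖ = (m.map (‖·‖)).prod from fun m => map_multiset_prod (normHom (α := ℂ)) m, Multiset.map_map, Multiset.map_map]
    have h3 : q.roots = (L : Multiset ℂ) := (Multiset.coe_toList _).symm
    rw [h3, Multiset.map_coe, Multiset.prod_coe]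
    have h4 : L = List.ofFn (fun i : Fin n => L.get (Fin.cast hlen.symm i)) := by
      conv_lhs => rw [← List.ofFn_get L]
      exact List.ofFn_congr hlen L.get
    conv_lhs => rw [h4]
    rw [List.map_ofFn, List.prod_ofFn]
    simp only [Function.comp]
    simp
  rw [hev]
  exact Finset.prod_le_prod (fun i _ => abs_nonneg _)
    (fun i _ => clamp_le_cabs ht _)


variable {a b : ℝ} {n : ℕ}

lemma cont_in_xi (a b : ℝ) (t : ℝ) :
    Continuous (fun ξ : Fin n → ℝ => t ^ a * (1 - t) ^ b * |(prodP ξ).eval t|) := by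
  have : Continuous (fun ξ : Fin n → ℝ => (prodP ξ).eval t) := by
    simp only [evalP]
    exact continuous_finset_prod _ (fun i _ => continuous_const.sub (continuous_apply i))
  exact continuous_const.mul this.abs

lemma exists_minimizer (ha : 0 ≤ a) (hb : 0 ≤ b) (n : ℕ) :
    ∃ ξ : Fin n → ℝ, (∀ i, ξ i ∈ Set.Icc (0:ℝ) 1) ∧
      (∀ ζ : Fin n → ℝ, (∀ i, ζ i ∈ Set.Icc (0:ℝ) 1) →
        intervalSup a b (prodP ξ) ≤ intervalSup a b (prodP ζ)) ∧
      intervalSup a b (prodP ξ) = devE n a b := by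
  classical
  set box : Set (Fin n → ℝ) := Set.Icc 0 1 with hbox
  have hboxmem : ∀ ζ : Fin n → ℝ, ζ ∈ box ↔ ∀ i, ζ i ∈ Set.Icc (0:ℝ) 1 := by
    intro ζ
    constructor
    · rintro ⟨h1, h2⟩ i; exact ⟨h1 i, h2 i⟩
    · intro h; exact ⟨fun i => (h i).1, fun i => (h i).2⟩
  set F : (Fin n → ℝ) → ℝ := fun ξ => intervalSup a b (prodP ξ) with hF
  set S' : Set ℝ := F '' box with hS'
  have hS'ne : S'.Nonempty := ⟨F 0, ⟨0, by simp [hbox], rfl⟩⟩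
  have hS'bdd : BddBelow S' := by
    refine ⟨0, ?_⟩
    rintro r ⟨ζ, -, rfl⟩
    exact intervalSup_nonneg ha hb _
  set E0 : ℝ := sInf S' with hE0
  have hseq : ∀ k : ℕ, ∃ x, x ∈ box ∧ F x < E0 + 1/(k+1) := by
    intro k
    have hlt : sInf S' < E0 + 1/(k+1) := by
      rw [← hE0]
      have : (0:ℝ) < 1/(k+1) := by positivity
      linarith
    obtain ⟨r, ⟨x, hx, rfl⟩, hr⟩ := exists_lt_of_csInf_lt hS'ne hlt
    exact ⟨x, hx, hr⟩
  choose u hu1 hu2 using hseq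
  obtain ⟨x, hxbox, φ, hφ, hconv⟩ := isCompact_Icc.tendsto_subseq hu1
  have hFx_le : F x ≤ E0 := by
    refine intervalSup_le _ (fun t ht => ?_)
    have h1 : Filter.Tendsto (fun k => t ^ a * (1 - t) ^ b * |(prodP (u (φ k))).eval t|) Filter.atTop
        (nhds (t ^ a * (1 - t) ^ b * |(prodP x).eval t|)) :=
      ((cont_in_xi a b t).tendsto x).comp hconv
    have h2 : Filter.Tendsto (fun k : ℕ => E0 + 1/((φ k : ℝ)+1)) Filter.atTop (nhds E0) := by
      have : Filter.Tendsto (fun k : ℕ => 1/((k:ℝ)+1)) Filter.atTop (nhds 0) :=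
        tendsto_one_div_add_atTop_nhds_zero_nat
      have h3 := this.comp hφ.tendsto_atTop
      simpa using tendsto_const_nhds.add h3
    refine le_of_tendsto_of_tendsto' h1 h2 (fun k => ?_)
    exact le_trans (le_intervalSup ha hb _ ht) (le_of_lt (by exact_mod_cast hu2 (φ k)))
  have hFx_ge : E0 ≤ F x := csInf_le hS'bdd ⟨x, hxbox, rfl⟩
  have hFxE0 : F x = E0 := le_antisymm hFx_le hFx_ge
  have hxIcc : ∀ i, x i ∈ Set.Icc (0:ℝ) 1 := (hboxmem x).1 hxbox
  have hminBox : ∀ ζ : Fin n → ℝ, (∀ i, ζ i ∈ Set.Icc (0:ℝ) 1) → F x ≤ F ζ := by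
    intro ζ hζ
    rw [hFxE0]
    exact csInf_le hS'bdd ⟨ζ, (hboxmem ζ).2 hζ, rfl⟩
  refine ⟨x, hxIcc, hminBox, ?_⟩
  -- devE
  set T : Set ℝ := {r : ℝ | ∃ p : Polynomial ℝ, p.Monic ∧ p.natDegree = n ∧ r = intervalSup a b p}
    with hT
  have hmemT : F x ∈ T := ⟨prodP x, monicP x, degP x, rfl⟩
  have hTbdd : BddBelow T := by
    refine ⟨0, ?_⟩
    rintro r ⟨p, -, -, rfl⟩
    exact intervalSup_nonneg ha hb _
  refine le_antisymm ?_ (csInf_le hTbdd hmemT)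
  refine le_csInf ⟨_, hmemT⟩ ?_
  rintro r ⟨p, hmon, hdeg, rfl⟩
  obtain ⟨ξ, hξIcc, hdom⟩ := exists_clamped hmon hdeg
  refine le_trans (hminBox ξ hξIcc) ?_
  refine intervalSup_mono (fun t ht => ?_) ha hb
  rw [evalP, Finset.abs_prod]
  exact hdom t ht

lemma minimizer_pos (ha : 0 ≤ a) (hb : 0 ≤ b) (ξ : Fin n → ℝ)
    (hξ : ∀ i, ξ i ∈ Set.Icc (0:ℝ) 1) : 0 < intervalSup a b (prodP ξ) := by
  obtain ⟨t, ht⟩ : (Set.Ioo (0:ℝ) 1 \ Set.range ξ).Nonempty := by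
    refine Set.Infinite.nonempty (Set.Infinite.diff ?_ (Set.finite_range ξ))
    exact Set.infinite_coe_iff.mp (Set.Ioo.infinite zero_lt_one)
  obtain ⟨⟨ht0, ht1⟩, htr⟩ := ht
  have hIcc : t ∈ Set.Icc (0:ℝ) 1 := ⟨ht0.le, ht1.le⟩
  refine lt_of_lt_of_le ?_ (le_intervalSup ha hb _ hIcc)
  have hp : (prodP ξ).eval t ≠ 0 := by
    rw [evalP]
    refine Finset.prod_ne_zero_iff.2 (fun i _ => sub_ne_zero.2 ?_)
    exact fun h => htr ⟨i, (h.symm)⟩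
  exact mul_pos (mul_pos (Real.rpow_pos_of_pos ht0 a)
    (Real.rpow_pos_of_pos (by linarith) b)) (abs_pos.2 hp)

end ChebAux
section Moves
open Polynomial Finset
variable {a b : ℝ} {n : ℕ}

/-- pointwise max bounds -/
lemma abs_sub_le_max_left {t s : ℝ} (ht : 0 ≤ t) (hs : 0 ≤ s) : |t - s| ≤ max t s := by
  rcases le_total s t with h | h
  · rw [abs_of_nonneg (by linarith)]; exact le_max_of_le_left (by linarith)
  · rw [abs_of_nonpos (by linarith)]; exact le_max_of_le_right (by linarith)

lemma abs_sub_le_max_right {t s : ℝ} (ht : t ≤ 1) (hs : s ≤ 1) : |t - s| ≤ max (1 - t) (1 - s) := by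
  rcases le_total s t with h | h
  · rw [abs_of_nonneg (by linarith)]; exact le_max_of_le_right (by linarith)
  · rw [abs_of_nonpos (by linarith)]; exact le_max_of_le_left (by linarith)

lemma abs_pair_le_max {t c ε : ℝ} :
    |t - (c - ε)| * |t - (c + ε)| ≤ max (|t - c| * |t - c|) (ε * ε) := by
  rw [← abs_mul]
  have h : (t - (c - ε)) * (t - (c + ε)) = (t - c) * (t - c) - ε * ε := by ring
  rw [h]
  rcases le_total (ε * ε) ((t - c) * (t - c)) with h1 | h1
  · rw [abs_of_nonneg (by linarith)]
    refine le_max_of_le_left ?_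
    have : 0 ≤ ε * ε := mul_self_nonneg ε
    calc (t-c)*(t-c) - ε*ε ≤ (t-c)*(t-c) := by linarith
    _ = |t-c| * |t-c| := by rw [← abs_mul, abs_of_nonneg (mul_self_nonneg _)]
  · rw [abs_of_nonpos (by linarith)]
    refine le_max_of_le_right ?_
    have : 0 ≤ (t-c)*(t-c) := mul_self_nonneg _
    linarith

/-- `devE` is a lower bound for the sup of any root-product polynomial. -/
lemma devE_le_prodP (ha : 0 ≤ a) (hb : 0 ≤ b) (ξ : Fin n → ℝ) :
    devE n a b ≤ intervalSup a b (ChebAux.prodP ξ) := by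
  refine csInf_le ⟨0, ?_⟩ ⟨ChebAux.prodP ξ, ChebAux.monicP ξ, ChebAux.degP ξ, rfl⟩
  rintro r ⟨p, -, -, rfl⟩
  exact ChebAux.intervalSup_nonneg ha hb _

/-- Single-root move: replacing the root `ξ i` by `s` keeps the sup at `devE`
provided the pointwise max-bound holds. -/
lemma move_core (ha : 0 ≤ a) (hb : 0 ≤ b) {ξ : Fin n → ℝ}
    (hFξ : intervalSup a b (ChebAux.prodP ξ) = devE n a b) (i : Fin n) {s ε : ℝ}
    (hbound : ∀ t ∈ Set.Icc (0:ℝ) 1, |t - s| ≤ max (|t - ξ i|) ε)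
    (hε : ε * intervalSup a b (∏ j ∈ Finset.univ.erase i, (X - C (ξ j))) ≤ devE n a b)
    (hεpos : 0 ≤ ε) :
    intervalSup a b (ChebAux.prodP (Function.update ξ i s)) = devE n a b := by
  classical
  set η := Function.update ξ i s with hη
  set Q : Polynomial ℝ := ∏ j ∈ Finset.univ.erase i, (X - C (ξ j)) with hQ
  refine le_antisymm ?_ (devE_le_prodP ha hb η)
  refine ChebAux.intervalSup_le _ (fun t ht => ?_)
  set w := t ^ a * (1 - t) ^ b with hw
  have hw0 : 0 ≤ w := ChebAux.w_nonneg ht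
  have hQev : |Q.eval t| = ∏ j ∈ Finset.univ.erase i, |t - ξ j| := by
    rw [hQ, eval_prod, Finset.abs_prod]
    simp
  set A : ℝ := ∏ j ∈ Finset.univ.erase i, |t - ξ j| with hA
  have hA0 : 0 ≤ A := Finset.prod_nonneg (fun j _ => abs_nonneg _)
  have hηev : |(ChebAux.prodP η).eval t| = |t - s| * A := by
    rw [ChebAux.evalP, Finset.abs_prod,
      ← Finset.mul_prod_erase Finset.univ (fun j => |t - η j|) (Finset.mem_univ i)]
    congr 1
    · rw [hη, Function.update_self]
    · refine Finset.prod_congr rfl (fun j hj => ?_)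
      rw [hη, Function.update_of_ne (Finset.mem_erase.1 hj).1]
  have hξev : |(ChebAux.prodP ξ).eval t| = |t - ξ i| * A := by
    rw [ChebAux.evalP, Finset.abs_prod,
      ← Finset.mul_prod_erase Finset.univ (fun j => |t - ξ j|) (Finset.mem_univ i)]
  have step1 : w * |(ChebAux.prodP η).eval t| ≤ (w * A) * max (|t - ξ i|) ε := by
    rw [hηev, show w * (|t - s| * A) = (w * A) * |t - s| by ring]
    exact mul_le_mul_of_nonneg_left (hbound t ht) (mul_nonneg hw0 hA0)
  have step2 : (w * A) * max (|t - ξ i|) ε = max (w * |(ChebAux.prodP ξ).eval t|) (ε * (w * |Q.eval t|)) := by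
    rw [mul_max_of_nonneg _ _ (mul_nonneg hw0 hA0), hξev, hQev]
    congr 1 <;> ring
  refine le_trans step1 (le_trans (le_of_eq step2) (max_le ?_ ?_))
  · rw [← hFξ]; exact ChebAux.le_intervalSup ha hb _ ht
  · refine le_trans ?_ hε
    exact mul_le_mul_of_nonneg_left (ChebAux.le_intervalSup ha hb Q ht) hεpos

/-- Pair move: replacing a double root `c = ξ i = ξ j` by `s₁, s₂`. -/
lemma move_pair_core (ha : 0 ≤ a) (hb : 0 ≤ b) {ξ : Fin n → ℝ}
    (hFξ : intervalSup a b (ChebAux.prodP ξ) = devE n a b) {i j : Fin n} (hij : i ≠ j)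
    {s₁ s₂ ε : ℝ}
    (hbound : ∀ t ∈ Set.Icc (0:ℝ) 1, |t - s₁| * |t - s₂| ≤ max (|t - ξ i| * |t - ξ j|) ε)
    (hε : ε * intervalSup a b (∏ k ∈ (Finset.univ.erase i).erase j, (X - C (ξ k))) ≤ devE n a b)
    (hεpos : 0 ≤ ε) :
    intervalSup a b (ChebAux.prodP (Function.update (Function.update ξ i s₁) j s₂)) = devE n a b := by
  classical
  set η := Function.update (Function.update ξ i s₁) j s₂ with hη
  have hηi : η i = s₁ := by rw [hη, Function.update_of_ne hij, Function.update_self]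
  have hηj : η j = s₂ := by rw [hη, Function.update_self]
  have hηk : ∀ k, k ≠ i → k ≠ j → η k = ξ k := by
    intro k hki hkj
    rw [hη, Function.update_of_ne hkj, Function.update_of_ne hki]
  set Q : Polynomial ℝ := ∏ k ∈ (Finset.univ.erase i).erase j, (X - C (ξ k)) with hQ
  have hjmem : j ∈ Finset.univ.erase i := Finset.mem_erase.2 ⟨hij.symm, Finset.mem_univ j⟩
  refine le_antisymm ?_ (devE_le_prodP ha hb η)
  refine ChebAux.intervalSup_le _ (fun t ht => ?_)
  set w := t ^ a * (1 - t) ^ b with hw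
  have hw0 : 0 ≤ w := ChebAux.w_nonneg ht
  set B : ℝ := ∏ k ∈ (Finset.univ.erase i).erase j, |t - ξ k| with hB
  have hB0 : 0 ≤ B := Finset.prod_nonneg (fun k _ => abs_nonneg _)
  have hQev : |Q.eval t| = B := by
    rw [hQ, eval_prod, Finset.abs_prod]
    simp [hB]
  have decomp : ∀ ζ : Fin n → ℝ, (∀ k, k ≠ i → k ≠ j → ζ k = ξ k) →
      |(ChebAux.prodP ζ).eval t| = |t - ζ i| * (|t - ζ j| * B) := by
    intro ζ hζ
    rw [ChebAux.evalP, Finset.abs_prod,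
      ← Finset.mul_prod_erase Finset.univ (fun k => |t - ζ k|) (Finset.mem_univ i),
      ← Finset.mul_prod_erase _ (fun k => |t - ζ k|) hjmem]
    congr 2
    rw [hB]
    refine Finset.prod_congr rfl (fun k hk => ?_)
    obtain ⟨hkj, hki, -⟩ := Finset.mem_erase.1 hk |>.imp id (Finset.mem_erase.1)
    rw [hζ k hki hkj]
  have hηev := decomp η hηk
  have hξev := decomp ξ (fun _ _ _ => rfl)
  rw [hηi, hηj] at hηev
  have step1 : w * |(ChebAux.prodP η).eval t| ≤ (w * B) * max (|t - ξ i| * |t - ξ j|) ε := by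
    rw [hηev, show w * (|t - s₁| * (|t - s₂| * B)) = (w * B) * (|t - s₁| * |t - s₂|) by ring]
    exact mul_le_mul_of_nonneg_left (hbound t ht) (mul_nonneg hw0 hB0)
  have step2 : (w * B) * max (|t - ξ i| * |t - ξ j|) ε
      = max (w * |(ChebAux.prodP ξ).eval t|) (ε * (w * |Q.eval t|)) := by
    rw [mul_max_of_nonneg _ _ (mul_nonneg hw0 hB0), hξev, hQev]
    congr 1 <;> ring
  refine le_trans step1 (le_trans (le_of_eq step2) (max_le ?_ ?_))
  · rw [← hFξ]; exact ChebAux.le_intervalSup ha hb _ ht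
  · refine le_trans ?_ hε
    exact mul_le_mul_of_nonneg_left (ChebAux.le_intervalSup ha hb Q ht) hεpos

end Moves
section Defect
open Finset

open Classical in
/-- Defect measure: number of roots outside `(0,1)` plus number of "missing" distinct values. -/
noncomputable def defect {n : ℕ} (ξ : Fin n → ℝ) : ℕ :=
  (Finset.univ.filter (fun i => ξ i ∉ Set.Ioo (0:ℝ) 1)).card
    + (n - (Finset.image ξ Finset.univ).card)

lemma defect_eq_zero {n : ℕ} {ξ : Fin n → ℝ} (h : defect ξ = 0) :
    (∀ i, ξ i ∈ Set.Ioo (0:ℝ) 1) ∧ Function.Injective ξ := by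
  classical
  rw [defect, Nat.add_eq_zero] at h
  obtain ⟨h1, h2⟩ := h
  constructor
  · intro i
    by_contra hbad
    have : i ∈ Finset.univ.filter (fun i => ξ i ∉ Set.Ioo (0:ℝ) 1) :=
      Finset.mem_filter.2 ⟨Finset.mem_univ i, hbad⟩
    have hemp := Finset.card_eq_zero.1 h1
    rw [hemp] at this
    exact absurd this (Finset.notMem_empty i)
  · have hle : (Finset.image ξ Finset.univ).card ≤ n := by
      calc (Finset.image ξ Finset.univ).card ≤ (Finset.univ : Finset (Fin n)).card :=
        Finset.card_image_le
      _ = n := by simp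
    have hcard : (Finset.image ξ Finset.univ).card = (Finset.univ : Finset (Fin n)).card := by
      simp only [Finset.card_univ, Fintype.card_fin]
      omega
    have := Finset.card_image_iff.1 hcard
    rw [Finset.coe_univ] at this
    exact fun x y hxy => this (Set.mem_univ x) (Set.mem_univ y) hxy

lemma defect_endpoint_move {n : ℕ} {ξ : Fin n → ℝ} {i : Fin n} {s : ℝ}
    (hi : ξ i ∉ Set.Ioo (0:ℝ) 1) (hs : s ∈ Set.Ioo (0:ℝ) 1) (hsr : s ∉ Set.range ξ) :
    defect (Function.update ξ i s) < defect ξ := by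
  classical
  set η := Function.update ξ i s with hη
  have hηi : η i = s := Function.update_self _ _ _
  have hηk : ∀ k, k ≠ i → η k = ξ k := fun k hk => Function.update_of_ne hk _ _
  -- first component strictly decreases
  have hfilt : (Finset.univ.filter (fun k => η k ∉ Set.Ioo (0:ℝ) 1)) ⊆
      (Finset.univ.filter (fun k => ξ k ∉ Set.Ioo (0:ℝ) 1)).erase i := by
    intro k hk
    rw [Finset.mem_filter] at hk
    have hki : k ≠ i := by
      rintro rfl
      exact hk.2 (hηi ▸ hs)
    rw [Finset.mem_erase, Finset.mem_filter]
    exact ⟨hki, Finset.mem_univ k, (hηk k hki) ▸ hk.2⟩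
  have himem : i ∈ Finset.univ.filter (fun k => ξ k ∉ Set.Ioo (0:ℝ) 1) :=
    Finset.mem_filter.2 ⟨Finset.mem_univ i, hi⟩
  have h1 : (Finset.univ.filter (fun k => η k ∉ Set.Ioo (0:ℝ) 1)).card <
      (Finset.univ.filter (fun k => ξ k ∉ Set.Ioo (0:ℝ) 1)).card := by
    calc (Finset.univ.filter (fun k => η k ∉ Set.Ioo (0:ℝ) 1)).card
        ≤ ((Finset.univ.filter (fun k => ξ k ∉ Set.Ioo (0:ℝ) 1)).erase i).card :=
          Finset.card_le_card hfilt
      _ < (Finset.univ.filter (fun k => ξ k ∉ Set.Ioo (0:ℝ) 1)).card := by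
          rw [Finset.card_erase_of_mem himem]
          have : 0 < (Finset.univ.filter (fun k => ξ k ∉ Set.Ioo (0:ℝ) 1)).card :=
            Finset.card_pos.2 ⟨i, himem⟩
          omega
  -- image cardinality does not decrease
  have hsub : Finset.image ξ Finset.univ ⊆
      insert (ξ i) ((Finset.image η Finset.univ).erase s) := by
    intro x hx
    obtain ⟨k, -, rfl⟩ := Finset.mem_image.1 hx
    rcases eq_or_ne k i with rfl | hki
    · exact Finset.mem_insert_self _ _
    · refine Finset.mem_insert_of_mem (Finset.mem_erase.2 ⟨?_, ?_⟩)
      · exact fun h => hsr ⟨k, h⟩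
      · rw [← hηk k hki]; exact Finset.mem_image_of_mem _ (Finset.mem_univ k)
  have hsmem : s ∈ Finset.image η Finset.univ := by
    rw [← hηi]; exact Finset.mem_image_of_mem _ (Finset.mem_univ i)
  have h2 : (Finset.image ξ Finset.univ).card ≤ (Finset.image η Finset.univ).card := by
    calc (Finset.image ξ Finset.univ).card
        ≤ (insert (ξ i) ((Finset.image η Finset.univ).erase s)).card := Finset.card_le_card hsub
      _ ≤ ((Finset.image η Finset.univ).erase s).card + 1 := Finset.card_insert_le _ _
      _ = (Finset.image η Finset.univ).card - 1 + 1 := by rw [Finset.card_erase_of_mem hsmem]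
      _ ≤ (Finset.image η Finset.univ).card := by
          have : 0 < (Finset.image η Finset.univ).card := Finset.card_pos.2 ⟨s, hsmem⟩
          omega
  rw [defect, defect]
  have := Nat.sub_le_sub_left h2 n
  omega

lemma defect_pair_move {n : ℕ} {ξ : Fin n → ℝ} {i j : Fin n} (hij : i ≠ j)
    (hint : ∀ k, ξ k ∈ Set.Ioo (0:ℝ) 1) (hξij : ξ i = ξ j) {s₁ s₂ : ℝ}
    (hs₁ : s₁ ∈ Set.Ioo (0:ℝ) 1) (hs₂ : s₂ ∈ Set.Ioo (0:ℝ) 1) (h12 : s₁ ≠ s₂)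
    (hs₁r : s₁ ∉ Set.range ξ) (hs₂r : s₂ ∉ Set.range ξ) :
    defect (Function.update (Function.update ξ i s₁) j s₂) < defect ξ := by
  classical
  set η := Function.update (Function.update ξ i s₁) j s₂ with hη
  have hηi : η i = s₁ := by rw [hη, Function.update_of_ne hij, Function.update_self]
  have hηj : η j = s₂ := Function.update_self _ _ _
  have hηk : ∀ k, k ≠ i → k ≠ j → η k = ξ k := by
    intro k hki hkj
    rw [hη, Function.update_of_ne hkj, Function.update_of_ne hki]
  -- first component: both zero
  have hfη : (Finset.univ.filter (fun k => η k ∉ Set.Ioo (0:ℝ) 1)) = ∅ := by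
    rw [Finset.filter_eq_empty_iff]
    intro k _
    rcases eq_or_ne k i with rfl | hki
    · rw [hηi]; simpa using hs₁
    rcases eq_or_ne k j with rfl | hkj
    · rw [hηj]; simpa using hs₂
    · rw [hηk k hki hkj]; simpa using hint k
  have hfξ : (Finset.univ.filter (fun k => ξ k ∉ Set.Ioo (0:ℝ) 1)) = ∅ := by
    rw [Finset.filter_eq_empty_iff]
    intro k _
    simpa using hint k
  -- image of ξ has card ≤ n - 1
  have himgξ : Finset.image ξ Finset.univ = Finset.image ξ (Finset.univ.erase j) := by
    apply Finset.Subset.antisymm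
    · intro x hx
      obtain ⟨k, -, rfl⟩ := Finset.mem_image.1 hx
      rcases eq_or_ne k j with rfl | hkj
      · rw [← hξij]
        exact Finset.mem_image_of_mem _ (Finset.mem_erase.2 ⟨hij, Finset.mem_univ i⟩)
      · exact Finset.mem_image_of_mem _ (Finset.mem_erase.2 ⟨hkj, Finset.mem_univ k⟩)
    · exact Finset.image_subset_image (Finset.subset_univ _)
  have hcξ : (Finset.image ξ Finset.univ).card ≤ n - 1 := by
    rw [himgξ]
    calc (Finset.image ξ (Finset.univ.erase j)).card ≤ (Finset.univ.erase j).card :=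
      Finset.card_image_le
    _ = n - 1 := by rw [Finset.card_erase_of_mem (Finset.mem_univ j)]; simp
  -- image of η has card ≥ card ξ + 1
  have hs₁mem : s₁ ∈ Finset.image η Finset.univ := by
    rw [← hηi]; exact Finset.mem_image_of_mem _ (Finset.mem_univ i)
  have hs₂mem : s₂ ∈ (Finset.image η Finset.univ).erase s₁ := by
    refine Finset.mem_erase.2 ⟨h12.symm, ?_⟩
    rw [← hηj]; exact Finset.mem_image_of_mem _ (Finset.mem_univ j)
  have hsub : Finset.image ξ Finset.univ ⊆
      insert (ξ i) (((Finset.image η Finset.univ).erase s₁).erase s₂) := by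
    intro x hx
    obtain ⟨k, -, rfl⟩ := Finset.mem_image.1 hx
    rcases eq_or_ne k i with rfl | hki
    · exact Finset.mem_insert_self _ _
    rcases eq_or_ne k j with rfl | hkj
    · rw [← hξij]; exact Finset.mem_insert_self _ _
    · refine Finset.mem_insert_of_mem ?_
      rw [Finset.mem_erase, Finset.mem_erase]
      refine ⟨fun h => hs₂r ⟨k, h⟩, fun h => hs₁r ⟨k, h⟩, ?_⟩
      rw [← hηk k hki hkj]
      exact Finset.mem_image_of_mem _ (Finset.mem_univ k)
  have h2 : (Finset.image ξ Finset.univ).card + 1 ≤ (Finset.image η Finset.univ).card := by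
    have hη2 : 2 ≤ (Finset.image η Finset.univ).card := by
      have : ({s₁, s₂} : Finset ℝ) ⊆ Finset.image η Finset.univ := by
        intro x hx
        rcases Finset.mem_insert.1 hx with rfl | hx
        · exact hs₁mem
        · rw [Finset.mem_singleton.1 hx]
          exact (Finset.mem_erase.1 hs₂mem).2
      calc 2 = ({s₁, s₂} : Finset ℝ).card := by rw [Finset.card_insert_of_notMem (by simpa using h12), Finset.card_singleton]
      _ ≤ _ := Finset.card_le_card this
    have step : (Finset.image ξ Finset.univ).card
        ≤ (((Finset.image η Finset.univ).erase s₁).erase s₂).card + 1 :=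
      le_trans (Finset.card_le_card hsub) (Finset.card_insert_le _ _)
    rw [Finset.card_erase_of_mem hs₂mem, Finset.card_erase_of_mem hs₁mem] at step
    omega
  have hn1 : 1 ≤ n := by
    rcases Nat.eq_zero_or_pos n with rfl | h
    · exact absurd i.2 (by simp)
    · exact h
  have hcη : (Finset.image η Finset.univ).card ≤ n := by
    calc (Finset.image η Finset.univ).card ≤ (Finset.univ : Finset (Fin n)).card :=
      Finset.card_image_le
    _ = n := by simp
  rw [defect, defect, hfη, hfξ]
  simp only [Finset.card_empty]
  omega
end Defect
section Final
open Polynomial ChebAux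

variable {a b : ℝ} {n : ℕ}

lemma eps_mul_le {M E ε : ℝ} (hM : 0 ≤ M) (hE : 0 < E) (hε0 : 0 ≤ ε)
    (hεδ : ε ≤ E / (M + 1)) : ε * M ≤ E := by
  have h1 : (0:ℝ) < M + 1 := by linarith
  have h2 : E / (M + 1) * (M + 1) = E := div_mul_cancel₀ _ (ne_of_gt h1)
  nlinarith [mul_le_mul_of_nonneg_right hεδ hM]

lemma improve (ha : 0 ≤ a) (hb : 0 ≤ b) (hE : 0 < devE n a b) :
    ∀ m : ℕ, ∀ ξ : Fin n → ℝ, (∀ k, ξ k ∈ Set.Icc (0:ℝ) 1) →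
      intervalSup a b (prodP ξ) = devE n a b → defect ξ ≤ m →
      ∃ η : Fin n → ℝ, (∀ k, η k ∈ Set.Ioo (0:ℝ) 1) ∧ Function.Injective η ∧
        intervalSup a b (prodP η) = devE n a b := by
  intro m
  induction m with
  | zero =>
    intro ξ hbox hF hd
    obtain ⟨h1, h2⟩ := defect_eq_zero (Nat.le_zero.1 hd)
    exact ⟨ξ, h1, h2, hF⟩
  | succ m ih =>
    intro ξ hbox hF hd
    classical
    rcases Nat.eq_zero_or_pos (defect ξ) with h0 | hpos
    · obtain ⟨h1, h2⟩ := defect_eq_zero h0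
      exact ⟨ξ, h1, h2, hF⟩
    by_cases hep : ∃ i, ξ i ∉ Set.Ioo (0:ℝ) 1
    · -- endpoint move
      obtain ⟨i, hi⟩ := hep
      set Q : Polynomial ℝ := ∏ j ∈ Finset.univ.erase i, (X - C (ξ j)) with hQ
      set M := intervalSup a b Q with hM
      have hM0 : 0 ≤ M := intervalSup_nonneg ha hb Q
      set δ := devE n a b / (M + 1) with hδdef
      have hδ : 0 < δ := div_pos hE (by linarith)
      have hBad : (Set.range ξ ∪ (fun x : ℝ => 1 - x) '' Set.range ξ).Finite :=
        (Set.finite_range ξ).union ((Set.finite_range ξ).image _)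
      have hIooInf : (Set.Ioo (0:ℝ) (min 1 δ)).Infinite :=
        Set.infinite_coe_iff.mp (Set.Ioo.infinite (lt_min zero_lt_one hδ))
      obtain ⟨ε, hεIoo, hεBad⟩ := (hIooInf.diff hBad).nonempty
      obtain ⟨hε0, hεlt⟩ := hεIoo
      have hε1 : ε < 1 := lt_of_lt_of_le hεlt (min_le_left _ _)
      have hεδ : ε ≤ δ := le_of_lt (lt_of_lt_of_le hεlt (min_le_right _ _))
      have hεM : ε * M ≤ devE n a b := eps_mul_le hM0 hE hε0.le hεδ
      have hεr : ε ∉ Set.range ξ := fun h => hεBad (Set.mem_union_left _ h)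
      have h1εr : 1 - ε ∉ Set.range ξ := by
        intro h
        exact hεBad (Set.mem_union_right _ ⟨1 - ε, h, by ring⟩)
      have hi01 : ξ i = 0 ∨ ξ i = 1 := by
        obtain ⟨h01, h02⟩ := hbox i
        rw [Set.mem_Ioo] at hi
        push_neg at hi
        rcases eq_or_lt_of_le h01 with h | h
        · exact Or.inl h.symm
        · exact Or.inr (le_antisymm h02 (hi h))
      -- the new root
      obtain ⟨s, hsIoo, hsr, hsbound⟩ :
          ∃ s, s ∈ Set.Ioo (0:ℝ) 1 ∧ s ∉ Set.range ξ ∧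
            ∀ t ∈ Set.Icc (0:ℝ) 1, |t - s| ≤ max (|t - ξ i|) ε := by
        rcases hi01 with h | h
        · refine ⟨ε, ⟨hε0, hε1⟩, hεr, fun t ht => ?_⟩
          rw [h, sub_zero, abs_of_nonneg ht.1]
          exact abs_sub_le_max_left ht.1 hε0.le
        · refine ⟨1 - ε, ⟨by linarith, by linarith⟩, h1εr, fun t ht => ?_⟩
          rw [h, show |t - 1| = 1 - t by rw [abs_of_nonpos (by linarith [ht.2])]; ring]
          have := abs_sub_le_max_right ht.2 (by linarith : (1:ℝ) - ε ≤ 1)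
          simpa using this
      have hFη := move_core ha hb hF i hsbound (hM ▸ hεM) hε0.le
      have hdd := defect_endpoint_move hi hsIoo hsr
      have hboxη : ∀ k, Function.update ξ i s k ∈ Set.Icc (0:ℝ) 1 := by
        intro k
        rcases eq_or_ne k i with rfl | hk
        · rw [Function.update_self]; exact ⟨hsIoo.1.le, hsIoo.2.le⟩
        · rw [Function.update_of_ne hk]; exact hbox k
      exact ih _ hboxη hFη (by omega)
    · -- pair move
      push_neg at hep
      have hnotinj : ¬ Function.Injective ξ := by
        intro hinj
        have hci : (Finset.image ξ Finset.univ).card = n := by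
          rw [Finset.card_image_of_injective _ hinj]; simp
        have hcf : (Finset.univ.filter (fun k => ξ k ∉ Set.Ioo (0:ℝ) 1)).card = 0 := by
          rw [Finset.card_eq_zero, Finset.filter_eq_empty_iff]
          intro k _
          simpa using hep k
        have : defect ξ = 0 := by rw [defect, hci, hcf]; simp
        omega
      obtain ⟨i, j, hξij, hij⟩ : ∃ i j, ξ i = ξ j ∧ i ≠ j := by
        rw [Function.not_injective_iff] at hnotinj
        exact hnotinj
      set c := ξ i with hc
      have hcIoo : c ∈ Set.Ioo (0:ℝ) 1 := hep i
      set Q : Polynomial ℝ := ∏ k ∈ (Finset.univ.erase i).erase j, (X - C (ξ k)) with hQ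
      set M := intervalSup a b Q with hM
      have hM0 : 0 ≤ M := intervalSup_nonneg ha hb Q
      set δ := devE n a b / (M + 1) with hδdef
      have hδ : 0 < δ := div_pos hE (by linarith)
      set ε₀ := min (min c (1 - c)) (min 1 δ) with hε₀
      have hε₀pos : 0 < ε₀ := by
        refine lt_min (lt_min hcIoo.1 (by linarith [hcIoo.2])) (lt_min zero_lt_one hδ)
      have hBad : ((fun x : ℝ => x - c) '' Set.range ξ ∪ (fun x : ℝ => c - x) '' Set.range ξ).Finite :=
        ((Set.finite_range ξ).image _).union ((Set.finite_range ξ).image _)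
      have hIooInf : (Set.Ioo (0:ℝ) ε₀).Infinite :=
        Set.infinite_coe_iff.mp (Set.Ioo.infinite hε₀pos)
      obtain ⟨ε, hεIoo, hεBad⟩ := (hIooInf.diff hBad).nonempty
      obtain ⟨hε0, hεlt⟩ := hεIoo
      have hεc : ε < c := lt_of_lt_of_le hεlt (le_trans (min_le_left _ _) (min_le_left _ _))
      have hεc1 : ε < 1 - c := lt_of_lt_of_le hεlt (le_trans (min_le_left _ _) (min_le_right _ _))
      have hε1 : ε < 1 := lt_of_lt_of_le hεlt (le_trans (min_le_right _ _) (min_le_left _ _))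
      have hεδ : ε ≤ δ := le_of_lt (lt_of_lt_of_le hεlt (le_trans (min_le_right _ _) (min_le_right _ _)))
      have hs₁r : c - ε ∉ Set.range ξ := by
        intro h
        exact hεBad (Set.mem_union_right _ ⟨c - ε, h, by ring⟩)
      have hs₂r : c + ε ∉ Set.range ξ := by
        intro h
        exact hεBad (Set.mem_union_left _ ⟨c + ε, h, by ring⟩)
      have hs₁Ioo : c - ε ∈ Set.Ioo (0:ℝ) 1 := ⟨by linarith, by linarith [hcIoo.2]⟩
      have hs₂Ioo : c + ε ∈ Set.Ioo (0:ℝ) 1 := ⟨by linarith [hcIoo.1], by linarith⟩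
      have hεM : (ε * ε) * M ≤ devE n a b := by
        have h1 : ε * ε ≤ ε := by nlinarith
        have h2 : ε * M ≤ devE n a b := eps_mul_le hM0 hE hε0.le hεδ
        nlinarith
      have hbound : ∀ t ∈ Set.Icc (0:ℝ) 1,
          |t - (c - ε)| * |t - (c + ε)| ≤ max (|t - ξ i| * |t - ξ j|) (ε * ε) := by
        intro t _
        rw [← hc, ← hξij]
        exact abs_pair_le_max
      have hFη := move_pair_core ha hb hF hij hbound (hM ▸ hεM) (by nlinarith)
      have hdd := defect_pair_move hij hep hξij hs₁Ioo hs₂Ioo (by intro h; linarith [hε0]  ) hs₁r hs₂r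
      have hboxη : ∀ k, Function.update (Function.update ξ i (c - ε)) j (c + ε) k ∈ Set.Icc (0:ℝ) 1 := by
        intro k
        rcases eq_or_ne k j with rfl | hkj
        · rw [Function.update_self]; exact ⟨hs₂Ioo.1.le, hs₂Ioo.2.le⟩
        rw [Function.update_of_ne hkj]
        rcases eq_or_ne k i with rfl | hki
        · rw [Function.update_self]; exact ⟨hs₁Ioo.1.le, hs₁Ioo.2.le⟩
        · rw [Function.update_of_ne hki]; exact hbox k
      exact ih _ hboxη hFη (by omega)

end Final


/-- for `α, β ≥ 0` and `n ≥ 1` there is an extremal monic polynomial of degree `n`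
for `E_n(α,β)` whose roots `ξ₁ < ⋯ < ξₙ` are distinct and lie in `(0,1)`. -/
theorem exists_extremal_with_simple_roots (a b : ℝ) (ha : 0 ≤ a) (hb : 0 ≤ b)
    (n : ℕ) (hn : 1 ≤ n) :
    ∃ ξ : Fin n → ℝ, StrictMono ξ ∧ (∀ i, ξ i ∈ Set.Ioo (0 : ℝ) 1) ∧
      intervalSup a b (∏ i, (Polynomial.X - Polynomial.C (ξ i))) = devE n a b := by
  classical
  obtain ⟨x, hxIcc, hxmin, hxE⟩ := ChebAux.exists_minimizer ha hb n
  have hE : 0 < devE n a b := hxE ▸ ChebAux.minimizer_pos ha hb x hxIcc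
  obtain ⟨η, hηIoo, hηinj, hηF⟩ := improve ha hb hE (defect x) x hxIcc hxE le_rfl
  set σ := Tuple.sort η with hσ
  refine ⟨η ∘ σ, ?_, fun i => hηIoo _, ?_⟩
  · exact (Tuple.monotone_sort η).strictMono_of_injective (hηinj.comp σ.injective)
  · have hprod : ∏ i, (Polynomial.X - Polynomial.C ((η ∘ σ) i)) = ChebAux.prodP η := by
      rw [ChebAux.prodP]
      exact Equiv.prod_comp σ (fun i => Polynomial.X - Polynomial.C (η i))
    rw [hprod, hηF]
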